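/- For an odd prime p and integer e ≥ 1, the number of squares in ℤ/p^eℤ (including 0) equals p^e/2 - p^(e-1)/2 + (p^(e-1) - p^((e+1) mod 2))/(2(p+1)) + 1. -/

import Mathlib

lemma sq_eq_one_cases {p e : ℕ} (hp : p.Prime) (hodd : Odd p)
    (x : ZMod (p ^ e)) (hx : x ^ 2 = 1) : x = 1 ∨ x = -1 := by
  haveI : NeZero (p ^ e) := ⟨pow_ne_zero e hp.pos.ne'⟩
  have hpint : Prime (p : ℤ) := Nat.prime_iff_prime_int.mp hp
  set k : ℤ := (x.val : ℤ) with hk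
  have hxk : ((k : ℤ) : ZMod (p ^ e)) = x := by
    simp [hk, ZMod.natCast_val, ZMod.cast_id]
  have hdvd : ((p : ℤ)) ^ e ∣ (k - 1) * (k + 1) := by
    have h' : ((k - 1) * (k + 1) : ℤ) = k ^ 2 - 1 := by ring
    rw [h']
    have h2 : (((k ^ 2 - 1 : ℤ)) : ZMod (p ^ e)) = 0 := by
      push_cast [hxk, hx]; ring
    rwa [ZMod.intCast_zmod_eq_zero_iff_dvd, Int.natCast_pow] at h2
  by_cases h1 : (p : ℤ) ∣ k + 1
  · have h2 : ¬ (p : ℤ) ∣ k - 1 := by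
      intro h2
      have hd2 : (p : ℤ) ∣ 2 := by
        have h3 := dvd_sub h1 h2
        simpa using h3
      have hd2' : p ∣ 2 := by exact_mod_cast hd2
      have := (Nat.prime_dvd_prime_iff_eq hp Nat.prime_two).mp hd2'
      subst this
      simp [Nat.odd_iff] at hodd
    have hcop : IsCoprime ((p : ℤ) ^ e) (k - 1) :=
      IsCoprime.pow_left (hpint.coprime_iff_not_dvd.mpr h2)
    have h4 : ((p : ℤ)) ^ e ∣ k + 1 := hcop.dvd_of_dvd_mul_left (mul_comm (k-1) (k+1) ▸ hdvd)
    right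
    have h5 : (((k + 1 : ℤ)) : ZMod (p ^ e)) = 0 := by
      rw [ZMod.intCast_zmod_eq_zero_iff_dvd]; exact_mod_cast h4
    push_cast [hxk] at h5
    linear_combination h5
  · have hcop : IsCoprime ((p : ℤ) ^ e) (k + 1) :=
      IsCoprime.pow_left (hpint.coprime_iff_not_dvd.mpr h1)
    have h4 : ((p : ℤ)) ^ e ∣ k - 1 := hcop.dvd_of_dvd_mul_right hdvd
    left
    have h5 : (((k - 1 : ℤ)) : ZMod (p ^ e)) = 0 := by
      rw [ZMod.intCast_zmod_eq_zero_iff_dvd]; exact_mod_cast h4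
    push_cast [hxk] at h5
    linear_combination h5


lemma card_unit_squares {p e : ℕ} (hp : p.Prime) (hodd : Odd p) (he : 1 ≤ e) :
    2 * Nat.card {c : ZMod (p ^ e) // (∃ x : ZMod (p ^ e), x ^ 2 = c) ∧ IsUnit c}
      = Nat.totient (p ^ e) := by
  haveI : NeZero (p ^ e) := ⟨pow_ne_zero e hp.pos.ne'⟩
  have hp3 : 3 ≤ p := by
    have h1 := hp.two_le
    have h2 := Nat.odd_iff.mp hodd
    omega
  have hn3 : 2 < p ^ e := lt_of_lt_of_le (by omega) (le_trans (le_refl p) (Nat.le_self_pow (by omega) p))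
  set G := (ZMod (p ^ e))ˣ
  set f : G →* G := powMonoidHom 2 with hf
  -- kernel has two elements
  have hker : (f.ker : Set G) = {1, -1} := by
    ext u
    simp only [SetLike.mem_coe, MonoidHom.mem_ker, hf, powMonoidHom_apply, Set.mem_insert_iff,
      Set.mem_singleton_iff]
    constructor
    · intro h
      have h' : (u : ZMod (p ^ e)) ^ 2 = 1 := by
        rw [← Units.val_pow_eq_pow_val, h, Units.val_one]
      rcases sq_eq_one_cases hp hodd _ h' with h'' | h''
      · left; exact Units.ext (by simpa using h'')
      · right; exact Units.ext (by rw [Units.val_neg, Units.val_one]; exact h'')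
    · rintro (rfl | rfl)
      · simp
      · rw [neg_one_sq]
  haveI : Fact (2 < p ^ e) := ⟨hn3⟩
  have hone_ne : (1 : G) ≠ -1 := by
    intro h
    have h2 := congrArg (Units.val) h
    simp only [Units.val_one, Units.val_neg] at h2
    exact ZMod.neg_one_ne_one h2.symm
  have hkercard : Nat.card f.ker = 2 := by
    have h3 : Nat.card (f.ker : Set G) = 2 := by
      rw [hker, Nat.card_coe_set_eq, Set.ncard_pair hone_ne]
    simpa using h3
  have hGcard : Nat.card G = Nat.totient (p ^ e) := by
    rw [Nat.card_eq_fintype_card, ZMod.card_units_eq_totient]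
  have hquot : Nat.card (G ⧸ f.ker) = Nat.card f.range :=
    Nat.card_congr (QuotientGroup.quotientKerEquivRange f).toEquiv
  have hsplit : Nat.totient (p ^ e) = Nat.card f.range * 2 := by
    rw [← hGcard, Subgroup.card_eq_card_quotient_mul_card_subgroup f.ker, hquot, hkercard]
  -- now the bijection
  have hbij : Nat.card f.range
      = Nat.card {c : ZMod (p ^ e) // (∃ x : ZMod (p ^ e), x ^ 2 = c) ∧ IsUnit c} := by
    apply Nat.card_eq_of_bijective
      (fun u => ⟨((u : G) : ZMod (p ^ e)), by
        obtain ⟨y, hy⟩ := u.2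
        refine ⟨⟨(y : ZMod (p ^ e)), ?_⟩, (u : G).isUnit⟩
        rw [← hy]
        norm_cast⟩)
    constructor
    · intro u v h
      simp only [Subtype.mk.injEq] at h
      exact Subtype.ext (Units.ext h)
    · rintro ⟨c, ⟨x, hx⟩, hu⟩
      have hux : IsUnit x := by
        have : IsUnit (x ^ 2) := hx ▸ hu
        exact (isUnit_pow_iff (two_ne_zero)).mp this
      refine ⟨⟨hu.unit, ⟨hux.unit, ?_⟩⟩, ?_⟩
      · apply Units.ext
        simp only [hf, powMonoidHom_apply, Units.val_pow_eq_pow_val, IsUnit.unit_spec]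
        exact hx
      · simp
  omega

lemma card_nonunit_squares_base {p : ℕ} (hp : p.Prime) :
    Nat.card {c : ZMod p // (∃ x : ZMod p, x ^ 2 = c) ∧ ¬IsUnit c} = 1 := by
  haveI : Fact p.Prime := ⟨hp⟩
  have h : ∀ c : ZMod p, ((∃ x : ZMod p, x ^ 2 = c) ∧ ¬IsUnit c) ↔ c ∈ ({0} : Set (ZMod p)) := by
    intro c
    simp only [Set.mem_singleton_iff]
    constructor
    · rintro ⟨-, hnu⟩
      by_contra h0
      exact hnu (isUnit_iff_ne_zero.mpr h0)
    · rintro rfl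
      exact ⟨⟨0, by ring⟩, by simp⟩
  rw [Nat.card_congr (Equiv.subtypeEquivRight h), Nat.card_coe_set_eq, Set.ncard_singleton]

lemma card_nonunit_squares_step {p : ℕ} (hp : p.Prime) (m : ℕ) :
    Nat.card {c : ZMod (p ^ (m + 2)) // (∃ x : ZMod (p ^ (m + 2)), x ^ 2 = c) ∧ ¬IsUnit c}
      = Nat.card {c : ZMod (p ^ m) // ∃ x : ZMod (p ^ m), x ^ 2 = c} := by
  haveI : NeZero (p ^ m) := ⟨pow_ne_zero m hp.pos.ne'⟩
  haveI : NeZero (p ^ (m + 2)) := ⟨pow_ne_zero _ hp.pos.ne'⟩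
  have hmod : p ^ (m + 2) = p ^ 2 * p ^ m := by ring
  have hpunit : ¬ IsUnit ((p : ZMod (p ^ (m + 2)))) := by
    rw [ZMod.isUnit_iff_coprime]
    intro hcop
    have h1 : p ∣ Nat.gcd p (p ^ (m + 2)) := Nat.dvd_gcd dvd_rfl (dvd_pow_self p (by omega))
    rw [hcop] at h1
    exact hp.one_lt.ne' (Nat.eq_one_of_dvd_one h1 ▸ rfl)
  -- the map
  symm
  apply Nat.card_eq_of_bijective (fun d =>
    ⟨((p ^ 2 * (d : ZMod (p ^ m)).val : ℕ) : ZMod (p ^ (m + 2))), by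
      obtain ⟨y, hy⟩ := d.2
      constructor
      · refine ⟨((p * y.val : ℕ) : ZMod (p ^ (m + 2))), ?_⟩
        have hvm : y.val ^ 2 ≡ (d : ZMod (p ^ m)).val [MOD p ^ m] := by
          rw [← ZMod.natCast_eq_natCast_iff]
          push_cast
          simp [ZMod.natCast_val, ZMod.cast_id, hy]
        have h2 : p ^ 2 * y.val ^ 2 ≡ p ^ 2 * (d : ZMod (p ^ m)).val [MOD p ^ (m + 2)] := by
          rw [hmod]; exact hvm.mul_left' _
        rw [← ZMod.natCast_eq_natCast_iff] at h2
        rw [← h2]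
        push_cast
        ring
      · intro hu
        have h3 : IsUnit ((p : ZMod (p ^ (m + 2)))) := by
          have : ((p ^ 2 * (d : ZMod (p ^ m)).val : ℕ) : ZMod (p ^ (m + 2)))
              = (p : ZMod (p ^ (m + 2))) * ((p * (d : ZMod (p ^ m)).val : ℕ) : ZMod (p ^ (m + 2))) := by
            push_cast; ring
          rw [this] at hu
          exact isUnit_of_mul_isUnit_left hu
        exact hpunit h3⟩)
  constructor
  · intro d d' hdd
    simp only [Subtype.mk.injEq] at hdd
    rw [ZMod.natCast_eq_natCast_iff, hmod] at hdd
    have h4 := Nat.ModEq.mul_left_cancel' (pow_ne_zero 2 hp.pos.ne') hdd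
    have h5 : (d : ZMod (p ^ m)).val = (d' : ZMod (p ^ m)).val := by
      have l1 := ZMod.val_lt (d : ZMod (p ^ m))
      have l2 := ZMod.val_lt (d' : ZMod (p ^ m))
      unfold Nat.ModEq at h4
      rwa [Nat.mod_eq_of_lt l1, Nat.mod_eq_of_lt l2] at h4
    exact Subtype.ext (ZMod.val_injective _ h5)
  · rintro ⟨c, ⟨x, hx⟩, hnu⟩
    have hxnu : ¬ IsUnit x := fun h => hnu (hx ▸ (h.pow 2))
    have hpx : p ∣ x.val := by
      by_contra hnd
      apply hxnu
      have hcop : Nat.Coprime x.val (p ^ (m + 2)) :=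
        Nat.Coprime.pow_right _ ((hp.coprime_iff_not_dvd.mpr hnd).symm)
      have := (ZMod.isUnit_iff_coprime x.val (p ^ (m + 2))).mpr hcop
      simpa [ZMod.natCast_val, ZMod.cast_id] using this
    obtain ⟨t, ht⟩ := hpx
    refine ⟨⟨((t ^ 2 : ℕ) : ZMod (p ^ m)), ⟨((t : ℕ) : ZMod (p ^ m)), by push_cast; ring⟩⟩, ?_⟩
    apply Subtype.ext
    show ((p ^ 2 * (((t ^ 2 : ℕ) : ZMod (p ^ m))).val : ℕ) : ZMod (p ^ (m + 2))) = c
    have hvm : (((t ^ 2 : ℕ) : ZMod (p ^ m))).val ≡ t ^ 2 [MOD p ^ m] := by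
      rw [ZMod.val_natCast]
      exact Nat.mod_modEq _ _
    have h2 : p ^ 2 * (((t ^ 2 : ℕ) : ZMod (p ^ m))).val ≡ p ^ 2 * t ^ 2 [MOD p ^ (m + 2)] := by
      rw [hmod]; exact hvm.mul_left' _
    rw [← ZMod.natCast_eq_natCast_iff] at h2
    rw [h2, ← hx]
    have hxv : ((x.val : ℕ) : ZMod (p ^ (m + 2))) = x := by
      simp [ZMod.natCast_val, ZMod.cast_id]
    rw [← hxv, ht]
    push_cast
    ring

open scoped Classical in
lemma card_split_pred {α : Type*} [Finite α] (P Q : α → Prop) :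
    Nat.card {x : α // P x}
      = Nat.card {x : α // P x ∧ Q x} + Nat.card {x : α // P x ∧ ¬Q x} := by
  rw [Nat.card_congr (Equiv.subtypeSubtypeEquivSubtypeInter P Q).symm,
    Nat.card_congr (Equiv.subtypeSubtypeEquivSubtypeInter P (fun x => ¬ Q x)).symm,
    ← Nat.card_sum]
  exact Nat.card_congr (Equiv.sumCompl _).symm

lemma card_squares_zmod_one :
    Nat.card {c : ZMod (1 : ℕ) // ∃ x : ZMod (1 : ℕ), x ^ 2 = c} = 1 := by
  have : ∀ c : ZMod 1, ∃ x : ZMod 1, x ^ 2 = c := fun c => ⟨0, Subsingleton.elim _ _⟩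
  rw [Nat.card_congr (Equiv.subtypeUnivEquiv this)]
  simp [Nat.card_eq_fintype_card]

theorem count_squares_mod_odd_prime_power (p e : ℕ) (hp : p.Prime) (hodd : Odd p)
    (he : 1 ≤ e) :
    (Nat.card {c : ZMod (p ^ e) // ∃ x : ZMod (p ^ e), x ^ 2 = c} : ℚ)
      = (p : ℚ) ^ e / 2 - (p : ℚ) ^ (e - 1) / 2
        + ((p : ℚ) ^ (e - 1) - (p : ℚ) ^ ((e + 1) % 2)) / (2 * ((p : ℚ) + 1)) + 1 := by
  have hp3 : 3 ≤ p := by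
    have h1 := hp.two_le
    have h2 := Nat.odd_iff.mp hodd
    omega
  have hq3 : (3 : ℚ) ≤ (p : ℚ) := by exact_mod_cast hp3
  have hq1 : (p : ℚ) + 1 ≠ 0 := by positivity
  have key : ∀ k : ℕ, 2 * Nat.card {c : ZMod (p ^ (k + 2)) // ∃ x : ZMod (p ^ (k + 2)), x ^ 2 = c}
      = Nat.totient (p ^ (k + 2))
        + 2 * Nat.card {c : ZMod (p ^ k) // ∃ x : ZMod (p ^ k), x ^ 2 = c} := by
    intro k
    haveI : NeZero (p ^ (k + 2)) := ⟨pow_ne_zero _ hp.pos.ne'⟩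
    rw [card_split_pred (fun c : ZMod (p ^ (k + 2)) => ∃ x : ZMod (p ^ (k + 2)), x ^ 2 = c) IsUnit,
      card_nonunit_squares_step hp k]
    have hU := card_unit_squares (e := k + 2) hp hodd (by omega)
    omega
  have base1 : 2 * Nat.card {c : ZMod (p ^ 1) // ∃ x : ZMod (p ^ 1), x ^ 2 = c} = p + 1 := by
    haveI : NeZero (p ^ 1) := ⟨pow_ne_zero _ hp.pos.ne'⟩
    rw [card_split_pred (fun c : ZMod (p ^ 1) => ∃ x : ZMod (p ^ 1), x ^ 2 = c) IsUnit]
    have hU := card_unit_squares (e := 1) hp hodd le_rfl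
    have hB : Nat.card {c : ZMod (p ^ 1) // (∃ x : ZMod (p ^ 1), x ^ 2 = c) ∧ ¬IsUnit c} = 1 := by
      rw [pow_one]
      exact card_nonunit_squares_base hp
    have htot : Nat.totient (p ^ 1) = p - 1 := by
      rw [pow_one, Nat.totient_prime hp]
    omega
  have base0 : Nat.card {c : ZMod (p ^ 0) // ∃ x : ZMod (p ^ 0), x ^ 2 = c} = 1 := by
    rw [pow_zero]
    exact card_squares_zmod_one
  revert he
  induction e using Nat.strong_induction_on with
  | _ e IH =>
    intro he
    rcases show e = 0 ∨ e = 1 ∨ e = 2 ∨ ∃ k, e = k + 3 by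
        rcases e with _ | _ | _ | k
        · exact Or.inl rfl
        · exact Or.inr (Or.inl rfl)
        · exact Or.inr (Or.inr (Or.inl rfl))
        · exact Or.inr (Or.inr (Or.inr ⟨k, rfl⟩))
      with rfl | rfl | rfl | ⟨k, rfl⟩
    · omega
    · -- e = 1
      have hb : (2 : ℚ) * Nat.card {c : ZMod (p ^ 1) // ∃ x : ZMod (p ^ 1), x ^ 2 = c}
          = (p : ℚ) + 1 := by exact_mod_cast base1
      norm_num
      linarith
    · -- e = 2
      have h2 := key 0
      rw [base0] at h2
      have htot : Nat.totient (p ^ 2) = p ^ 1 * (p - 1) := by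
        have := Nat.totient_prime_pow hp (n := 2) (by omega)
        simpa using this
      rw [htot] at h2
      have h3 := congrArg (fun n : ℕ => (n : ℚ)) h2
      push_cast [Nat.cast_sub hp.one_le] at h3
      norm_num
      linarith
    · -- e = k + 3
      have IHk := IH (k + 1) (by omega) (by omega)
      have hkey := key (k + 1)
      rw [show k + 1 + 2 = k + 3 by omega] at hkey
      have htot : Nat.totient (p ^ (k + 3)) = p ^ (k + 2) * (p - 1) := by
        have := Nat.totient_prime_pow hp (n := k + 3) (by omega)
        rwa [show k + 3 - 1 = k + 2 by omega] at this
      rw [htot] at hkey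
      have hcast : (2 : ℚ) * Nat.card {c : ZMod (p ^ (k + 3)) // ∃ x : ZMod (p ^ (k + 3)), x ^ 2 = c}
          = (p : ℚ) ^ (k + 2) * ((p : ℚ) - 1)
            + 2 * Nat.card {c : ZMod (p ^ (k + 1)) // ∃ x : ZMod (p ^ (k + 1)), x ^ 2 = c} := by
        have := congrArg (fun n : ℕ => (n : ℚ)) hkey
        push_cast [Nat.cast_sub hp.one_le] at this
        linarith
      rw [show k + 1 - 1 = k by omega, show (k + 1 + 1) % 2 = k % 2 by omega] at IHk
      rw [show k + 3 - 1 = k + 2 by omega, show (k + 3 + 1) % 2 = k % 2 by omega]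
      have halg : (p : ℚ) ^ (k + 3) / 2 - (p : ℚ) ^ (k + 2) / 2
            + ((p : ℚ) ^ (k + 2) - (p : ℚ) ^ (k % 2)) / (2 * ((p : ℚ) + 1)) + 1
          = (p : ℚ) ^ (k + 2) * ((p : ℚ) - 1) / 2
            + ((p : ℚ) ^ (k + 1) / 2 - (p : ℚ) ^ k / 2
              + ((p : ℚ) ^ k - (p : ℚ) ^ (k % 2)) / (2 * ((p : ℚ) + 1)) + 1) := by
        field_simp
        ring
      rw [halg]
      linarith
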